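/- (No arbitrage domain for the Symmetric SVI, b = 2.) Let ρ = 0, μ = 0, b = 2 and γ > −1. Then the Symmetric SVI is arbitrage-free if and only if γ > 0 and σ ≥ 1/γ. -/

import Mathlib

/-- SVI normalized total variance shape: `N(l) = γ + ρ·l + √(l²+1)`. -/
noncomputable def Nf (γ ρ l : ℝ) : ℝ := γ + ρ * l + Real.sqrt (l ^ 2 + 1)

/-- `N'(l) = ρ + l/√(l²+1)`. -/
noncomputable def Nf' (ρ l : ℝ) : ℝ := ρ + l / Real.sqrt (l ^ 2 + 1)

/-- `N''(l) = (l²+1)^(−3/2)`. -/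
noncomputable def Nf'' (l : ℝ) : ℝ := (l ^ 2 + 1) ^ (-(3 : ℝ) / 2)

/-- `h(l) = 1 − N'(l)·(l+μ)/(2N(l))`. -/
noncomputable def hf (γ ρ μ l : ℝ) : ℝ := 1 - Nf' ρ l * (l + μ) / (2 * Nf γ ρ l)

/-- `g(l) = N'(l)/4`. -/
noncomputable def gf (ρ l : ℝ) : ℝ := Nf' ρ l / 4

/-- `g₂(l) = N''(l) − N'(l)²/(2N(l))`. -/
noncomputable def g2 (γ ρ l : ℝ) : ℝ := Nf'' l - (Nf' ρ l) ^ 2 / (2 * Nf γ ρ l)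

/-- `G₁(l) = (h(l) − b·g(l))·(h(l) + b·g(l))`. -/
noncomputable def G1 (γ b ρ μ l : ℝ) : ℝ :=
  (hf γ ρ μ l - b * gf ρ l) * (hf γ ρ μ l + b * gf ρ l)

/-- Fukasawa (weak no-arbitrage) conditions: both factors of `G₁` are positive on `ℝ`. -/
def FukasawaCond (γ b ρ μ : ℝ) : Prop :=
  ∀ l : ℝ, 0 < hf γ ρ μ l - b * gf ρ l ∧ 0 < hf γ ρ μ l + b * gf ρ l

/-- No Butterfly arbitrage (Martini–Mingone characterization): Fukasawa conditions plus
`G₁ + (b/(2σ))·g₂ ≥ 0` on `ℝ`. -/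
def ArbitrageFree (γ b ρ μ σ : ℝ) : Prop :=
  FukasawaCond γ b ρ μ ∧ ∀ l : ℝ, 0 ≤ G1 γ b ρ μ l + b / (2 * σ) * g2 γ ρ l

/-- Numerator polynomial for `G₁ + (1/σ)g₂` in the symmetric `b = 2` case. -/
noncomputable def Tpoly (γ σ s : ℝ) : ℝ :=
  σ*(2*γ*s^4 + 3*(γ^2+1)*s^3 + 6*γ*s^2 + (1+γ^2)*s)
    + 2*(-s^4 - γ*s^3 + 3*s^2 + 5*γ*s + 2*γ^2)

lemma rpow_key (l s : ℝ) (hs0 : 0 < s) (hs2 : s^2 = l^2+1) :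
    (l^2+1) ^ (-(3:ℝ)/2) = (s^3)⁻¹ := by
  rw [← hs2, show (s:ℝ)^2 = s ^ (2:ℝ) by rw [← Real.rpow_natCast s 2]; norm_num,
    ← Real.rpow_mul hs0.le]
  norm_num

lemma sqrt_facts (l : ℝ) :
    (Real.sqrt (l^2+1))^2 = l^2+1 ∧ 1 ≤ Real.sqrt (l^2+1) := by
  have h0 : 0 ≤ Real.sqrt (l^2+1) := Real.sqrt_nonneg _
  have h2 : (Real.sqrt (l^2+1))^2 = l^2+1 := Real.sq_sqrt (by positivity)
  exact ⟨h2, by nlinarith [sq_nonneg l]⟩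

/-- Main algebraic identity: the no-arbitrage functional as a single fraction. -/
lemma bigid (γ σ l : ℝ) (hγ : -1 < γ) (hσ : 0 < σ) :
    G1 γ 2 0 0 l + 2 / (2*σ) * g2 γ 0 l =
      Tpoly γ σ (Real.sqrt (l^2+1))
        / (4*σ*(Real.sqrt (l^2+1))^3*(γ+Real.sqrt (l^2+1))^2) := by
  obtain ⟨hs2, hs1⟩ := sqrt_facts l
  set s := Real.sqrt (l^2+1) with hsdef
  have hs0 : 0 < s := by linarith
  have hN : 0 < γ + s := by linarith
  have h1 : s ≠ 0 := ne_of_gt hs0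
  have h2 : γ + s ≠ 0 := ne_of_gt hN
  have h3 : σ ≠ 0 := ne_of_gt hσ
  simp only [G1, hf, gf, g2, Nf, Nf', Nf'', Tpoly, zero_mul, zero_add, add_zero]
  rw [show l ^ 2 + 1 = l^2 + 1 from rfl, rpow_key l s hs0 hs2, ← hsdef]
  field_simp
  linear_combination (-(16*s*σ*l^2 - 32*s*γ - 16*s*γ^2*σ - 96*s^2*γ*σ - 32*s^2 - 64*s^3*σ - 16*s*σ)) * hs2

/-- Identity for the Fukasawa factor `h + 2g`. -/
lemma fukid_plus (γ l : ℝ) (hγ : -1 < γ) :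
    hf γ 0 0 l + 2 * gf 0 l =
      ((Real.sqrt (l^2+1))^2 + l*Real.sqrt (l^2+1) + 1 + γ*(2*Real.sqrt (l^2+1)+l))
        / (2*Real.sqrt (l^2+1)*(γ+Real.sqrt (l^2+1))) := by
  obtain ⟨hs2, hs1⟩ := sqrt_facts l
  set s := Real.sqrt (l^2+1) with hsdef
  have hs0 : 0 < s := by linarith
  have hN : 0 < γ + s := by linarith
  have h1 : s ≠ 0 := ne_of_gt hs0
  have h2 : γ + s ≠ 0 := ne_of_gt hN
  simp only [hf, gf, Nf, Nf', zero_mul, zero_add, add_zero]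
  rw [show l ^ 2 + 1 = l^2 + 1 from rfl, ← hsdef]
  field_simp
  linear_combination 4 * hs2

/-- Identity for the Fukasawa factor `h − 2g`. -/
lemma fukid_minus (γ l : ℝ) (hγ : -1 < γ) :
    hf γ 0 0 l - 2 * gf 0 l =
      ((Real.sqrt (l^2+1))^2 - l*Real.sqrt (l^2+1) + 1 + γ*(2*Real.sqrt (l^2+1)-l))
        / (2*Real.sqrt (l^2+1)*(γ+Real.sqrt (l^2+1))) := by
  obtain ⟨hs2, hs1⟩ := sqrt_facts l
  set s := Real.sqrt (l^2+1) with hsdef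
  have hs0 : 0 < s := by linarith
  have hN : 0 < γ + s := by linarith
  have h1 : s ≠ 0 := ne_of_gt hs0
  have h2 : γ + s ≠ 0 := ne_of_gt hN
  simp only [hf, gf, Nf, Nf', zero_mul, zero_add, add_zero]
  rw [show l ^ 2 + 1 = l^2 + 1 from rfl, ← hsdef]
  field_simp
  linear_combination 4 * hs2

/-- no-arbitrage domain for the Symmetric SVI with b = 2. -/
theorem symmetric_b_two (γ σ : ℝ) (hγ : -1 < γ) (hσ : 0 < σ) :
    ArbitrageFree γ 2 0 0 σ ↔ 0 < γ ∧ σ ≥ 1 / γ := by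
  constructor
  · rintro ⟨hF, hG⟩
    have key : 1 ≤ σ * γ := by
      by_contra hc
      push_neg at hc
      obtain ⟨ε, hε⟩ : ∃ x : ℝ, x = 1 - σ*γ := ⟨_, rfl⟩
      have hε0 : 0 < ε := by rw [hε]; linarith
      obtain ⟨M, hM⟩ : ∃ x : ℝ, x = |3*σ*γ^2+3*σ-2*γ| + |6*σ*γ+6| + |σ+σ*γ^2+10*γ| + 4*γ^2 :=
        ⟨_, rfl⟩
      have hM0 : 0 ≤ M := by rw [hM]; positivity
      obtain ⟨s, hsdef⟩ : ∃ x : ℝ, x = M/(2*ε) + 1 := ⟨_, rfl⟩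
      have hdiv0 : 0 ≤ M/(2*ε) := div_nonneg hM0 (by linarith)
      have hs1 : 1 ≤ s := by rw [hsdef]; linarith
      have hs0 : 0 < s := by linarith
      obtain ⟨l, hldef⟩ : ∃ x : ℝ, x = Real.sqrt (s^2 - 1) := ⟨_, rfl⟩
      have hsl : Real.sqrt (l^2+1) = s := by
        rw [hldef, Real.sq_sqrt (by nlinarith), show s^2 - 1 + 1 = s^2 by ring,
          Real.sqrt_sq (by linarith)]
      have hT : 0 ≤ Tpoly γ σ s := by
        have h := hG l
        rw [bigid γ σ l hγ hσ, hsl] at h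
        have hden : 0 < 4*σ*s^3*(γ+s)^2 := by
          have hNp : 0 < γ + s := by linarith
          positivity
        have h2 := mul_nonneg h hden.le
        rwa [div_mul_cancel₀ _ (ne_of_gt hden)] at h2
      have e1 : Tpoly γ σ s = -2*ε*s^4 + (3*σ*γ^2+3*σ-2*γ)*s^3 + (6*σ*γ+6)*s^2
          + (σ+σ*γ^2+10*γ)*s + 4*γ^2 := by
        simp only [Tpoly]; rw [hε]; ring
      have hcube : s^2 ≤ s^3 := by nlinarith
      have hlin : s ≤ s^3 := by nlinarith
      have hone : (1:ℝ) ≤ s^3 := by nlinarith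
      have hT2 : Tpoly γ σ s ≤ -2*ε*s^4 + M*s^3 := by
        rw [e1, hM]
        nlinarith [mul_le_mul_of_nonneg_right (le_abs_self (3*σ*γ^2+3*σ-2*γ)) (show (0:ℝ) ≤ s^3 by positivity),
          mul_le_mul_of_nonneg_right (le_abs_self (6*σ*γ+6)) (show (0:ℝ) ≤ s^2 by positivity),
          mul_le_mul_of_nonneg_right (le_abs_self (σ+σ*γ^2+10*γ)) hs0.le,
          mul_le_mul_of_nonneg_left hcube (abs_nonneg (6*σ*γ+6)),
          mul_le_mul_of_nonneg_left hlin (abs_nonneg (σ+σ*γ^2+10*γ)),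
          mul_le_mul_of_nonneg_left hone (show (0:ℝ) ≤ 4*γ^2 by positivity)]
      have h2es : 2*ε*s = M + 2*ε := by
        rw [hsdef]
        field_simp
      have hT3 : -2*ε*s^4 + M*s^3 = -2*ε*s^3 := by
        linear_combination (-(s^3)) * h2es
      have hpos : 0 < ε*s^3 := by positivity
      linarith
    have hγ0 : 0 < γ := by nlinarith
    refine ⟨hγ0, ?_⟩
    rw [ge_iff_le, div_le_iff₀ hγ0]
    linarith
  · rintro ⟨hγ0, hσγ⟩
    have key : 1 ≤ σ * γ := by
      rw [ge_iff_le, div_le_iff₀ hγ0] at hσγ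
      linarith
    constructor
    · intro l
      obtain ⟨hs2, hs1⟩ := sqrt_facts l
      obtain ⟨s, hsdef⟩ : ∃ x : ℝ, Real.sqrt (l^2+1) = x := ⟨_, rfl⟩
      rw [hsdef] at hs2 hs1
      have hs0 : 0 < s := by linarith
      have hN : 0 < γ + s := by linarith
      have hlt : l < s := by nlinarith [sq_nonneg (s-l), sq_nonneg (s+l)]
      have hgt : -s < l := by nlinarith [sq_nonneg (s-l), sq_nonneg (s+l)]
      constructor
      · rw [fukid_minus γ l hγ, hsdef]
        apply div_pos
        · nlinarith [mul_pos hs0 (sub_pos.2 hlt), mul_pos hγ0 (show 0 < 2*s-l by linarith)]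
        · positivity
      · rw [fukid_plus γ l hγ, hsdef]
        apply div_pos
        · nlinarith [mul_pos hs0 (show 0 < s + l by linarith), mul_pos hγ0 (show 0 < 2*s+l by linarith)]
        · positivity
    · intro l
      obtain ⟨hs2, hs1⟩ := sqrt_facts l
      rw [bigid γ σ l hγ hσ]
      obtain ⟨s, hsdef⟩ : ∃ x : ℝ, Real.sqrt (l^2+1) = x := ⟨_, rfl⟩
      rw [hsdef] at hs2 hs1 ⊢
      have hs0 : 0 < s := by linarith
      have hN : 0 < γ + s := by linarith
      apply div_nonneg _ (by positivity)
      have h1 : γ ≤ σ*γ^2 := by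
        nlinarith [mul_le_mul_of_nonneg_left key hγ0.le]
      have c4 : (0:ℝ) ≤ 2*(σ*γ-1)*s^4 :=
        mul_nonneg (by linarith) (pow_nonneg hs0.le 4)
      have c3 : (0:ℝ) ≤ (3*σ*γ^2+3*σ-2*γ)*s^3 :=
        mul_nonneg (by linarith) (pow_nonneg hs0.le 3)
      have c2 : (0:ℝ) ≤ (6*σ*γ+6)*s^2 :=
        mul_nonneg (by linarith) (pow_nonneg hs0.le 2)
      have c1 : (0:ℝ) ≤ (σ+σ*γ^2+10*γ)*s :=
        mul_nonneg (by linarith) hs0.le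
      have c0 : (0:ℝ) ≤ 4*γ^2 := by positivity
      have e2 : Tpoly γ σ s = 2*(σ*γ-1)*s^4 + (3*σ*γ^2+3*σ-2*γ)*s^3 + (6*σ*γ+6)*s^2
          + (σ+σ*γ^2+10*γ)*s + 4*γ^2 := by
        simp only [Tpoly]; ring
      linarith
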